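/- Let q be a prime power, g a generator of F_q^×, d an integer, and ξ₀ a root in F_{q^3} of the irreducible polynomial x^3 - x^2 + g^{d-1} x - g^d ∈ F_q[x]. Assume ξ₀ is not a p-th power in F_{q^3}^× for any prime p dividing q^2 + q + 1. Then for any integer k with gcd(3k + d, q - 1) = 1, the element ξ_k := g^k ξ₀ is a generator of F_{q^3}^×, with Tr_{F_{q^3}/F_q}(ξ_k) = g^k and Tr_{F_{q^3}/F_q}(ξ_k^{-1}) = g^{-k-1}. -/

import Mathlib

open Polynomial Module

/-- Power basis from a generator of the whole algebra. -/
noncomputable def pbOfTop {F E : Type*} [Field F] [Field E] [Algebra F E]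
    {x : E} (hint : IsIntegral F x) (htop : Algebra.adjoin F ({x} : Set E) = ⊤) :
    PowerBasis F E :=
  (Algebra.adjoin.powerBasis hint).map <|
    (Subalgebra.equivOfEq _ _ htop).trans Subalgebra.topEquiv

lemma pbOfTop_gen {F E : Type*} [Field F] [Field E] [Algebra F E]
    {x : E} (hint : IsIntegral F x) (htop : Algebra.adjoin F ({x} : Set E) = ⊤) :
    (pbOfTop hint htop).gen = x := rfl

lemma pbOfTop_dim {F E : Type*} [Field F] [Field E] [Algebra F E]
    {x : E} (hint : IsIntegral F x) (htop : Algebra.adjoin F ({x} : Set E) = ⊤) :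
    (pbOfTop hint htop).dim = (minpoly F x).natDegree := rfl

/-- In a finite cyclic group, an element killed by `card/p` is a `p`-th power. -/
lemma exists_pow_eq_of_pow_div_eq_one {G : Type*} [Group G] [Fintype G] (γ : G)
    (hγ : ∀ x : G, x ∈ Subgroup.zpowers γ) {p : ℕ} (hp : p ≠ 0)
    (hpd : p ∣ Fintype.card G) {x : G} (hx : x ^ (Fintype.card G / p) = 1) :
    ∃ y : G, y ^ p = x := by
  obtain ⟨m, hm⟩ := Subgroup.mem_zpowers_iff.mp (hγ x)
  have hord : orderOf γ = Fintype.card G := by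
    rw [orderOf_eq_card_of_forall_mem_zpowers hγ, Nat.card_eq_fintype_card]
  have h1 : γ ^ (m * ((Fintype.card G / p : ℕ) : ℤ)) = 1 := by
    rw [zpow_mul, hm, zpow_natCast, hx]
  have h2 : ((Fintype.card G : ℕ) : ℤ) ∣ m * ((Fintype.card G / p : ℕ) : ℤ) := by
    have := orderOf_dvd_iff_zpow_eq_one.mpr h1
    rwa [hord] at this
  have hcp : (p : ℤ) * ((Fintype.card G / p : ℕ) : ℤ) = ((Fintype.card G : ℕ) : ℤ) := by
    exact_mod_cast Nat.mul_div_cancel' hpd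
  have hne : ((Fintype.card G / p : ℕ) : ℤ) ≠ 0 := by
    have : 0 < Fintype.card G / p :=
      Nat.div_pos (Nat.le_of_dvd Fintype.card_pos hpd) (Nat.pos_of_ne_zero hp)
    exact_mod_cast this.ne'
  have hpm : (p : ℤ) ∣ m := by
    rw [← hcp] at h2
    exact (mul_dvd_mul_iff_right hne).mp h2
  obtain ⟨m', rfl⟩ := hpm
  exact ⟨γ ^ m', by rw [← zpow_natCast, ← zpow_mul, mul_comm m' ((p : ℤ)), hm]⟩

theorem stmt5 {F E : Type*} [Field F] [Field E] [Fintype F] [Fintype E]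
    [Algebra F E] (q : ℕ) (hF : Fintype.card F = q) (hE : Fintype.card E = q ^ 3)
    (g : Fˣ) (hg : ∀ x : Fˣ, x ∈ Subgroup.zpowers g) (d : ℤ)
    (P : F[X])
    (hP : P = X ^ 3 - X ^ 2 + C ((g ^ (d - 1) : Fˣ) : F) * X - C ((g ^ d : Fˣ) : F))
    (hirr : Irreducible P) (ξ₀ : E) (hroot : aeval ξ₀ P = 0)
    (hnp : ∀ p : ℕ, p.Prime → p ∣ q ^ 2 + q + 1 → ¬ ∃ y : E, y ^ p = ξ₀)
    (k : ℤ) (hgcd : Int.gcd (3 * k + d) (q - 1 : ℕ) = 1) :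
    ∃ ζ : Eˣ, (ζ : E) = algebraMap F E ((g ^ k : Fˣ) : F) * ξ₀ ∧
      (∀ x : Eˣ, x ∈ Subgroup.zpowers ζ) ∧
      Algebra.trace F E (algebraMap F E ((g ^ k : Fˣ) : F) * ξ₀) = ((g ^ k : Fˣ) : F) ∧
      Algebra.trace F E (algebraMap F E ((g ^ k : Fˣ) : F) * ξ₀)⁻¹
        = ((g ^ (-k - 1) : Fˣ) : F) := by
  classical
  have : FiniteDimensional F E := Module.Finite.of_finite
  have hq2 : 2 ≤ q := hF ▸ Fintype.one_lt_card
  have hq0 : 0 < q := by omega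
  have hPmonic : P.Monic := by rw [hP]; monicity!
  have hPdeg : P.natDegree = 3 := by rw [hP]; compute_degree!
  have hrank : finrank F E = 3 := by
    have h := card_eq_pow_finrank (K := F) (V := E)
    rw [hF, hE] at h
    exact (Nat.pow_right_injective hq2 h.symm)
  have hminp : minpoly F ξ₀ = P := (minpoly.eq_of_irreducible_of_monic hirr hroot hPmonic).symm
  have hξ0 : ξ₀ ≠ 0 := by
    intro h
    rw [h, hP] at hroot
    simp only [map_add, map_sub, map_mul, map_pow, aeval_X, aeval_C, ne_eq,
      OfNat.ofNat_ne_zero, not_false_eq_true, zero_pow, mul_zero, sub_zero, add_zero,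
      zero_sub, neg_eq_zero, sub_self, zero_add] at hroot
    exact Units.ne_zero (g ^ d)
      ((map_eq_zero_iff (algebraMap F E) (algebraMap F E).injective).mp hroot)
  have hint : IsIntegral F ξ₀ := IsIntegral.of_finite F ξ₀
  have htop : Algebra.adjoin F ({ξ₀} : Set E) = ⊤ := by
    have h1 : finrank F (Algebra.adjoin F ({ξ₀} : Set E)) = 3 := by
      rw [(Algebra.adjoin.powerBasis hint).finrank, Algebra.adjoin.powerBasis_dim,
        hminp, hPdeg]
    rw [← Algebra.toSubmodule_eq_top]
    apply Submodule.eq_top_of_finrank_eq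
    rw [Subalgebra.finrank_toSubmodule, h1, hrank]
  set pb : PowerBasis F E := pbOfTop hint htop with hpb
  have hgen : pb.gen = ξ₀ := rfl
  have hdim : pb.dim = 3 := by rw [hpb, pbOfTop_dim, hminp, hPdeg]
  have hcoeff2 : P.coeff 2 = -1 := by
    rw [hP]; simp [coeff_X_pow]
  have hcoeff0 : P.coeff 0 = -((g ^ d : Fˣ) : F) := by
    rw [hP]; simp [coeff_X_pow]
  have htr0 : Algebra.trace F E ξ₀ = 1 := by
    have h := pb.trace_gen_eq_nextCoeff_minpoly
    rw [hgen, hminp] at h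
    rw [h, nextCoeff_of_natDegree_pos (by rw [hPdeg]; norm_num), hPdeg]
    norm_num [hcoeff2]
  have hnorm0 : Algebra.norm F ξ₀ = ((g ^ d : Fˣ) : F) := by
    have h := Algebra.PowerBasis.norm_gen_eq_coeff_zero_minpoly pb
    rw [hgen, hminp, hdim, hcoeff0] at h
    rw [h]; ring
  -- expanded root equation
  have hroot' : ξ₀ ^ 3 - ξ₀ ^ 2 + algebraMap F E ((g ^ (d - 1) : Fˣ) : F) * ξ₀
      - algebraMap F E ((g ^ d : Fˣ) : F) = 0 := by
    have := hroot
    rw [hP] at this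
    simpa only [map_add, map_sub, map_mul, map_pow, aeval_X, aeval_C] using this
  have hea : ((g ^ (-d) : Fˣ) : F) * ((g ^ (d - 1) : Fˣ) : F) = ((g⁻¹ : Fˣ) : F) := by
    rw [← Units.val_mul, ← zpow_add, show (-d) + (d - 1) = -1 by ring, zpow_neg_one]
  have heb : ((g ^ (-d) : Fˣ) : F) * ((g ^ d : Fˣ) : F) = 1 := by
    rw [← Units.val_mul, ← zpow_add, show (-d) + d = 0 by ring, zpow_zero, Units.val_one]
  have hea' : algebraMap F E ((g ^ (-d) : Fˣ) : F) * algebraMap F E ((g ^ (d - 1) : Fˣ) : F)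
      = algebraMap F E ((g⁻¹ : Fˣ) : F) := by rw [← map_mul, hea]
  have heb' : algebraMap F E ((g ^ (-d) : Fˣ) : F) * algebraMap F E ((g ^ d : Fˣ) : F)
      = 1 := by rw [← map_mul, heb, map_one]
  set Q : F[X] := X ^ 3 - C ((g⁻¹ : Fˣ) : F) * X ^ 2 + C ((g ^ (-d) : Fˣ) : F) * X
      - C ((g ^ (-d) : Fˣ) : F) with hQ
  have hQmonic : Q.Monic := by rw [hQ]; monicity!
  have hQdeg : Q.natDegree = 3 := by rw [hQ]; compute_degree!
  have hQroot : aeval ξ₀⁻¹ Q = 0 := by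
    simp only [hQ, map_add, map_sub, map_mul, map_pow, aeval_X, aeval_C]
    have h3 : ξ₀ ^ 3 ≠ 0 := pow_ne_zero _ hξ0
    apply mul_left_cancel₀ h3
    rw [mul_zero]
    have hinv : ξ₀ * ξ₀⁻¹ = 1 := mul_inv_cancel₀ hξ0
    linear_combination (ξ₀ ^ 2 * ξ₀⁻¹ ^ 2 + ξ₀ * ξ₀⁻¹ + 1
        - algebraMap F E ((g⁻¹ : Fˣ) : F) * ξ₀ * (ξ₀ * ξ₀⁻¹ + 1)
        + algebraMap F E ((g ^ (-d) : Fˣ) : F) * ξ₀ ^ 2) * hinv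
      + (-(algebraMap F E ((g ^ (-d) : Fˣ) : F))) * hroot' + ξ₀ * hea' - heb'
  have hmem : ξ₀ ∈ Algebra.adjoin F ({ξ₀⁻¹} : Set E) := by
    have hy : ξ₀⁻¹ ∈ Algebra.adjoin F ({ξ₀⁻¹} : Set E) :=
      Algebra.self_mem_adjoin_singleton F _
    have hx : ξ₀ = algebraMap F E ((g ^ d : Fˣ) : F) * ξ₀⁻¹ ^ 2
        - algebraMap F E ((g ^ (d - 1) : Fˣ) : F) * ξ₀⁻¹ + 1 := by
      have hinv : ξ₀ * ξ₀⁻¹ = 1 := mul_inv_cancel₀ hξ0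
      apply mul_left_cancel₀ (pow_ne_zero 2 hξ0)
      linear_combination (algebraMap F E ((g ^ (d - 1) : Fˣ) : F) * ξ₀
        - algebraMap F E ((g ^ d : Fˣ) : F) * (ξ₀ * ξ₀⁻¹ + 1)) * hinv + hroot'
    suffices h : algebraMap F E ((g ^ d : Fˣ) : F) * ξ₀⁻¹ ^ 2
        - algebraMap F E ((g ^ (d - 1) : Fˣ) : F) * ξ₀⁻¹ + 1
        ∈ Algebra.adjoin F ({ξ₀⁻¹} : Set E) by rwa [← hx] at h
    exact add_mem (sub_mem (mul_mem (Subalgebra.algebraMap_mem _ _) (pow_mem hy 2))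
      (mul_mem (Subalgebra.algebraMap_mem _ _) hy)) (one_mem _)
  have htop' : Algebra.adjoin F ({ξ₀⁻¹} : Set E) = ⊤ := by
    rw [eq_top_iff, ← htop]
    apply Algebra.adjoin_le
    intro z hz
    rw [Set.mem_singleton_iff] at hz
    rw [hz]
    exact hmem
  have hint' : IsIntegral F ξ₀⁻¹ := IsIntegral.of_finite F _
  set pb' : PowerBasis F E := pbOfTop hint' htop' with hpb'
  have hgen' : pb'.gen = ξ₀⁻¹ := rfl
  have hdeg' : (minpoly F ξ₀⁻¹).natDegree = 3 := by
    have h := pb'.finrank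
    rw [hrank, hpb', pbOfTop_dim] at h
    exact h.symm
  have hminQ : minpoly F ξ₀⁻¹ = Q :=
    (Polynomial.eq_of_monic_of_dvd_of_natDegree_le (minpoly.monic hint') hQmonic
      (minpoly.dvd F _ hQroot) (by rw [hQdeg, hdeg'])).symm
  have hQnext : Q.nextCoeff = -((g⁻¹ : Fˣ) : F) := by
    rw [nextCoeff_of_natDegree_pos (by rw [hQdeg]; norm_num), hQdeg]
    rw [hQ]; simp [coeff_X_pow]
  have htr1 : Algebra.trace F E ξ₀⁻¹ = ((g⁻¹ : Fˣ) : F) := by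
    have h := pb'.trace_gen_eq_nextCoeff_minpoly
    rw [hgen', hminQ, hQnext] at h
    rw [h]; ring
  -- unit setup
  set N := q ^ 3 - 1 with hN
  have hcardE : Fintype.card Eˣ = N := by rw [Fintype.card_units, hE]
  have hcardF : Fintype.card Fˣ = q - 1 := by rw [Fintype.card_units, hF]
  have hordg : orderOf g = q - 1 := by
    rw [orderOf_eq_card_of_forall_mem_zpowers hg, Nat.card_eq_fintype_card, hcardF]
  have hq1 : 1 ≤ q := hq0
  have hq3 : 1 ≤ q ^ 3 := Nat.one_le_pow _ _ hq0
  have hfact : N = (q - 1) * (q ^ 2 + q + 1) := by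
    rw [hN]; zify [hq1, hq3]; ring
  have hNpos : 0 < N := by
    have : 2 ^ 3 ≤ q ^ 3 := Nat.pow_le_pow_left hq2 3
    omega
  set φ : Fˣ →* Eˣ := Units.map (algebraMap F E).toMonoidHom with hφ
  have hφval : ∀ u : Fˣ, ((φ u : Eˣ) : E) = algebraMap F E (u : F) := fun u => rfl
  set u0 : Eˣ := Units.mk0 ξ₀ hξ0 with hu0
  set ζ : Eˣ := φ (g ^ k) * u0 with hζ
  have hζval : (ζ : E) = algebraMap F E ((g ^ k : Fˣ) : F) * ξ₀ := rfl
  obtain ⟨γ, hγ⟩ := IsCyclic.exists_generator (α := Eˣ)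
  have hord : orderOf ζ = N := by
    apply orderOf_eq_of_pow_and_pow_div_prime hNpos
    · rw [← hcardE]; exact pow_card_eq_one
    · intro p hp hpN h1
      have hp0 : p ≠ 0 := hp.ne_zero
      rcases (Nat.Prime.dvd_mul hp).mp (hfact ▸ hpN) with hp1 | hp2
      · -- p ∣ q - 1 : use the norm
        obtain ⟨y, hy⟩ := exists_pow_eq_of_pow_div_eq_one γ hγ hp0
          (hcardE ▸ hpN) (by rw [hcardE]; exact h1)
        -- norm of ζ
        have hnormζ : Algebra.norm F ((ζ : Eˣ) : E) = ((g ^ (3 * k + d) : Fˣ) : F) := by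
          rw [hζval, map_mul, Algebra.norm_algebraMap, hnorm0, hrank]
          rw [← Units.val_pow_eq_pow_val, ← Units.val_mul]
          congr 1
          rw [← zpow_natCast, ← zpow_mul, ← zpow_add]
          congr 1
          push_cast
          ring
        have hyne : Algebra.norm F ((y : Eˣ) : E) ≠ 0 := by
          rw [Algebra.norm_ne_zero_iff]
          exact Units.ne_zero y
        set z : Fˣ := Units.mk0 _ hyne with hz
        have hzp : z ^ p = g ^ (3 * k + d) := by
          apply Units.ext
          rw [Units.val_pow_eq_pow_val]
          show (Algebra.norm F ((y : Eˣ) : E)) ^ p = _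
          rw [← map_pow, ← Units.val_pow_eq_pow_val, hy, hnormζ]
        obtain ⟨m, hm⟩ := Subgroup.mem_zpowers_iff.mp (hg z)
        have hgone : g ^ ((3 * k + d) - m * p) = 1 := by
          have hmp : g ^ (m * (p : ℤ)) = g ^ (3 * k + d) := by
            rw [zpow_mul, hm, zpow_natCast, hzp]
          rw [zpow_sub, hmp]
          simp
        have hdvd1 : ((q - 1 : ℕ) : ℤ) ∣ ((3 * k + d) - m * p) := by
          rw [← hordg]
          exact orderOf_dvd_iff_zpow_eq_one.mpr hgone
        have hpq1 : (p : ℤ) ∣ ((q - 1 : ℕ) : ℤ) := Int.natCast_dvd_natCast.mpr hp1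
        have hpd : (p : ℤ) ∣ (3 * k + d) := by
          have h2 : (p : ℤ) ∣ ((3 * k + d) - m * p) := hpq1.trans hdvd1
          have h3 : (p : ℤ) ∣ m * p := dvd_mul_left _ _
          have := dvd_add h2 h3
          rwa [sub_add_cancel] at this
        have : (p : ℤ) ∣ (Int.gcd (3 * k + d) ((q - 1 : ℕ) : ℤ) : ℤ) :=
          Int.dvd_coe_gcd hpd hpq1
        rw [hgcd] at this
        have : p ∣ 1 := by exact_mod_cast this
        exact Nat.Prime.one_lt hp |>.ne' (Nat.dvd_one.mp this)
      · -- p ∣ q ^ 2 + q + 1 : use hnp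
        have hdiv : (q - 1) ∣ N / p := by
          rw [hfact, Nat.mul_div_assoc _ hp2]
          exact Dvd.intro _ rfl
        have hg1 : φ (g ^ k) ^ (N / p) = 1 := by
          rw [← map_pow]
          have h2 : (g ^ k) ^ (N / p) = (g ^ ((N / p : ℕ) : ℤ)) ^ k := by
            rw [← zpow_natCast (g ^ k) (N / p), ← zpow_mul, ← zpow_mul, mul_comm]
          have h3 : g ^ (N / p : ℕ) = 1 :=
            orderOf_dvd_iff_pow_eq_one.mp (hordg ▸ hdiv)
          rw [h2, zpow_natCast, h3, one_zpow, map_one]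
        have hu1 : u0 ^ (N / p) = 1 := by
          rw [hζ, mul_pow, hg1, one_mul] at h1
          exact h1
        obtain ⟨y, hy⟩ := exists_pow_eq_of_pow_div_eq_one γ hγ hp0
          (hcardE ▸ hpN) (by rw [hcardE]; exact hu1)
        refine hnp p hp hp2 ⟨((y : Eˣ) : E), ?_⟩
        rw [← Units.val_pow_eq_pow_val, hy]
        rfl
  refine ⟨ζ, hζval, ?_, ?_, ?_⟩
  · intro x
    have htopz : Subgroup.zpowers ζ = ⊤ := by
      apply Subgroup.eq_top_of_card_eq
      rw [Nat.card_zpowers, hord, ← hcardE, Nat.card_eq_fintype_card]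
    rw [htopz]
    trivial
  · rw [← Algebra.smul_def, map_smul, htr0, smul_eq_mul, mul_one]
  · have hinv : (algebraMap F E ((g ^ k : Fˣ) : F) * ξ₀)⁻¹
        = algebraMap F E ((g ^ (-k) : Fˣ) : F) * ξ₀⁻¹ := by
      rw [mul_inv, ← map_inv₀]
      congr 2
      rw [zpow_neg, Units.val_inv_eq_inv_val]
    rw [hinv, ← Algebra.smul_def, map_smul, htr1, smul_eq_mul, ← Units.val_mul,
      ← zpow_neg_one, ← zpow_add]
    congr 1
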